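/- arXiv:1207.3373 — 6 statements merged into one kernel-verified Lean document; each statement's English description precedes it below -/
import Mathlib

section
/- For all natural numbers n and k, the number of partial matchings of the row of n dots that consist of exactly k pairs equals the binomial coefficient C(n−k, k). Formally: the number of finite sets S ⊆ {0, 1, …, n−2} with |S| = k such that any two distinct elements of S differ by at least 2 is Nat.choose (n − k) k. -/
def rowM (n k : ℕ) : Set (Finset ℕ) :=
  {S : Finset ℕ | S ⊆ Finset.range (n - 1) ∧ S.card = k ∧
      ∀ a ∈ S, ∀ b ∈ S, a ≠ b → 2 ≤ Nat.dist a b}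

lemma rowM_finite (n k : ℕ) : (rowM n k).Finite := by
  apply Set.Finite.subset (Finset.finite_toSet ((Finset.range (n-1)).powerset))
  intro S hS
  rw [Finset.mem_coe, Finset.mem_powerset]
  exact hS.1

lemma rowM_zero (n : ℕ) : rowM n 0 = {∅} := by
  ext S
  simp only [rowM, Set.mem_setOf_eq, Set.mem_singleton_iff, Finset.card_eq_zero]
  constructor
  · rintro ⟨_, h, _⟩; exact h
  · rintro rfl; simp

lemma rowM_key : ∀ n k, (rowM n k).ncard = Nat.choose (n - k) k := by
  intro n
  induction n using Nat.strong_induction_on with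
  | _ n ih =>
    intro k
    match k with
    | 0 => simp [rowM_zero]
    | k + 1 =>
      by_cases hn : n ≤ 1
      · have : rowM n (k+1) = ∅ := by
          ext S
          simp only [rowM, Set.mem_setOf_eq, Set.mem_empty_iff_false, iff_false]
          rintro ⟨h1, h2, _⟩
          have : S ⊆ Finset.range 0 := by
            intro x hx; have := h1 hx; simp at this ⊢; omega
          simp [Finset.subset_empty.mp (by simpa using this)] at h2
        rw [this, Set.ncard_empty]
        have : n - (k+1) = 0 := by omega
        simp [this]
      · push_neg at hn
        -- n ≥ 2
        have hsplit : rowM n (k+1) =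
            rowM (n-1) (k+1) ∪ (insert (n-2) '' rowM (n-2) k) := by
          ext S
          simp only [rowM, Set.mem_setOf_eq, Set.mem_union, Set.mem_image]
          constructor
          · rintro ⟨h1, h2, h3⟩
            by_cases hm : n - 2 ∈ S
            · right
              refine ⟨S.erase (n-2), ⟨?_, ?_, ?_⟩, ?_⟩
              · intro x hx
                rw [Finset.mem_erase] at hx
                have hx1 := h1 hx.2
                rw [Finset.mem_range] at hx1 ⊢
                have := h3 x hx.2 (n-2) hm hx.1
                simp [Nat.dist] at this
                omega
              · rw [Finset.card_erase_of_mem hm, h2]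
                rfl
              · intro a ha b hb hab
                exact h3 a (Finset.mem_of_mem_erase ha) b (Finset.mem_of_mem_erase hb) hab
              · exact Finset.insert_erase hm
            · left
              refine ⟨?_, h2, h3⟩
              intro x hx
              have := h1 hx
              rw [Finset.mem_range] at this ⊢
              have : x ≠ n - 2 := fun h => hm (h ▸ hx)
              omega
          · rintro (⟨h1, h2, h3⟩ | ⟨T, ⟨h1, h2, h3⟩, rfl⟩)
            · refine ⟨?_, h2, h3⟩
              intro x hx
              have := h1 hx
              rw [Finset.mem_range] at this ⊢
              omega
            · have hTn : (n-2) ∉ T := by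
                intro h
                have := h1 h
                rw [Finset.mem_range] at this
                omega
              have hTlt : ∀ x ∈ T, x < n - 3 := by
                intro x hx
                have := h1 hx
                rw [Finset.mem_range] at this
                omega
              refine ⟨?_, ?_, ?_⟩
              · intro x hx
                rw [Finset.mem_insert] at hx
                rw [Finset.mem_range]
                rcases hx with rfl | hx
                · omega
                · have := hTlt x hx; omega
              · rw [Finset.card_insert_of_notMem hTn, h2]
              · intro a ha b hb hab
                rw [Finset.mem_insert] at ha hb
                rcases ha with rfl | ha <;> rcases hb with rfl | hb
                · omega
                · have := hTlt b hb; simp [Nat.dist]; omega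
                · have := hTlt a ha; simp [Nat.dist]; omega
                · exact h3 a ha b hb hab
        have hdisj : Disjoint (rowM (n-1) (k+1)) (insert (n-2) '' rowM (n-2) k) := by
          rw [Set.disjoint_left]
          rintro S ⟨h1, _, _⟩ ⟨T, ⟨hT1, _, _⟩, rfl⟩
          have : n - 2 ∈ Finset.range (n - 1 - 1) := h1 (Finset.mem_insert_self _ _)
          rw [Finset.mem_range] at this
          omega
        have hinj : Set.InjOn (insert (n-2)) (rowM (n-2) k) := by
          rintro S ⟨hS1, _, _⟩ T ⟨hT1, _, _⟩ h
          have hSn : (n-2) ∉ S := fun hm => by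
            have := hS1 hm; rw [Finset.mem_range] at this; omega
          have hTn : (n-2) ∉ T := fun hm => by
            have := hT1 hm; rw [Finset.mem_range] at this; omega
          have := congrArg (Finset.erase · (n-2)) h
          simpa [Finset.erase_insert hSn, Finset.erase_insert hTn] using this
        rw [hsplit, Set.ncard_union_eq hdisj (rowM_finite _ _)
            ((rowM_finite _ _).image _),
          Set.ncard_image_of_injOn hinj, ih (n-1) (by omega), ih (n-2) (by omega)]
        -- Pascal
        rcases Nat.lt_or_ge (k+1) n with h | h
        · have h1 : n - 1 - (k+1) = n - (k+1) - 1 := by omega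
          have h2 : n - 2 - k = n - (k+1) - 1 := by omega
          have h3 : n - (k+1) = (n - (k+1) - 1) + 1 := by omega
          rw [h1, h2, h3, Nat.choose_succ_succ' (n - (k+1) - 1) k]
          simp [Nat.add_comm]
        · have h1 : n - (k+1) = 0 := by omega
          have h2 : n - 1 - (k+1) = 0 := by omega
          have h3 : n - 2 - k = 0 := by omega
          rw [h1, h2, h3]
          simp [Nat.choose_eq_zero_of_lt (show 0 < k by omega)]

/-- The number of partial matchings of the row of `n` dots consisting of
exactly `k` pairs equals `Nat.choose (n - k) k`.  A partial matching is a finite set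
`S ⊆ {0, 1, …, n-2}` such that any two distinct elements of `S` differ by at least `2`. -/
theorem row_matching_count (n k : ℕ) :
    Set.ncard {S : Finset ℕ | S ⊆ Finset.range (n - 1) ∧ S.card = k ∧
      ∀ a ∈ S, ∀ b ∈ S, a ≠ b → 2 ≤ Nat.dist a b} = Nat.choose (n - k) k :=
  rowM_key n k
end

section
/- Let α be a linearly ordered type, let s be a finite subset of α, and let e, f be two distinct elements of α with e ∉ s and f ∉ s. Then the natural number |{g ∈ s : e < g}| + |{g ∈ insert e s : f < g}| + |{g ∈ s : f < g}| + |{g ∈ insert f s : e < g}| is odd. (Equivalently, the signs (−1)^{|{g ∈ s : e < g}|} · (−1)^{|{g ∈ insert e s : f < g}|} and (−1)^{|{g ∈ s : f < g}|} · (−1)^{|{g ∈ insert f s : e < g}|} attached to the two ways of enlarging s first by e then by f, respectively first by f then by e, are opposite.) -/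
/-- the sign lemma making the squares in the cube anticommute. -/
theorem sign_lemma {α : Type*} [LinearOrder α] (s : Finset α) (e f : α)
    (he : e ∉ s) (hf : f ∉ s) (hef : e ≠ f) :
    Odd ((s.filter (fun g => e < g)).card + (((insert e s).filter (fun g => f < g)).card)
      + ((s.filter (fun g => f < g)).card) + (((insert f s).filter (fun g => e < g)).card)) := by
  rw [Finset.filter_insert, Finset.filter_insert]
  rcases hef.lt_or_gt with h | h
  · rw [if_neg (not_lt.2 h.le), if_pos h,
      Finset.card_insert_of_notMem (fun hm => hf (Finset.mem_filter.1 hm).1)]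
    exact ⟨(s.filter (fun g => e < g)).card + (s.filter (fun g => f < g)).card, by ring⟩
  · rw [if_pos h, if_neg (not_lt.2 h.le),
      Finset.card_insert_of_notMem (fun hm => he (Finset.mem_filter.1 hm).1)]
    exact ⟨(s.filter (fun g => e < g)).card + (s.filter (fun g => f < g)).card, by ring⟩
end

section
/- Fix a natural number n, and let M_n denote the set of partial matchings of the row of n dots. Call a position e ∈ {0, …, n−2} admissible for S ∈ M_n if e ∉ S and |e − g| ≥ 2 for every g ∈ S (so that S ∪ {e} is again a partial matching). Define the ℤ-linear map d on the free ℤ-module with basis M_n (i.e., on M_n →₀ ℤ) by sending the basis element S to the sum, over all positions e admissible for S, of (−1)^{|{g ∈ S : e < g}|} times the basis element S ∪ {e}. Then d ∘ d = 0. -/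
open scoped Classical

/-- A partial matching of the row of `n` dots: a finite set of positions in
`{0, 1, …, n-2}` any two distinct elements of which differ by at least `2`. -/
def IsRowMatching (n : ℕ) (S : Finset ℕ) : Prop :=
  S ⊆ Finset.range (n - 1) ∧ ∀ a ∈ S, ∀ b ∈ S, a ≠ b → 2 ≤ Nat.dist a b

/-- The set `M_n` of partial matchings of the row of `n` dots. -/
def RowMatching (n : ℕ) : Type := {S : Finset ℕ // IsRowMatching n S}

/-- The combinatorial differential `d` on the free `ℤ`-module with basis `M_n`:
the basis element `S` is sent to the sum, over all positions `e` admissible for `S`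
(i.e. such that `e ∉ S` and `S ∪ {e}` is again a partial matching), of
`(-1) ^ |{g ∈ S : e < g}|` times the basis element `S ∪ {e}`. -/
noncomputable def rowDiff (n : ℕ) : (RowMatching n →₀ ℤ) →ₗ[ℤ] (RowMatching n →₀ ℤ) :=
  Finsupp.lift _ ℤ _ fun S =>
    ∑ e ∈ Finset.range (n - 1),
      if h : e ∉ S.val ∧ IsRowMatching n (insert e S.val) then
        ((-1 : ℤ) ^ ((S.val.filter (fun g => e < g)).card)) •
          Finsupp.single (⟨insert e S.val, h.2⟩ : RowMatching n) (1 : ℤ)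
      else 0

lemma isRowMatching_subset {n : ℕ} {S T : Finset ℕ} (h : IsRowMatching n T)
    (hST : S ⊆ T) : IsRowMatching n S :=
  ⟨hST.trans h.1, fun a ha b hb hab => h.2 a (hST ha) b (hST hb) hab⟩

lemma filter_insert_card {S : Finset ℕ} {e f : ℕ} (he : e ∉ S) :
    ((insert e S).filter (fun g => f < g)).card
      = (S.filter (fun g => f < g)).card + (if f < e then 1 else 0) := by
  rw [Finset.filter_insert]
  split
  · rw [Finset.card_insert_of_notMem (fun hc => he (Finset.mem_filter.1 hc).1)]
  · simp

@[reducible]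
def RowMatching.val {n : ℕ} (S : RowMatching n) : Finset ℕ := Subtype.val S

@[reducible]
def RowMatching.mk' {n : ℕ} (S : Finset ℕ) (h : IsRowMatching n S) : RowMatching n := ⟨S, h⟩

lemma rowDiff_single (n : ℕ) (S : RowMatching n) :
    rowDiff n (Finsupp.single S 1) =
      ∑ e ∈ Finset.range (n - 1),
        if h : e ∉ S.val ∧ IsRowMatching n (insert e S.val) then
          ((-1 : ℤ) ^ ((S.val.filter (fun g => e < g)).card)) •
            Finsupp.single (RowMatching.mk' (insert e S.val) h.2) (1 : ℤ)
        else 0 := by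
  simp [rowDiff, Finsupp.lift_apply, Finsupp.sum_single_index]
  rfl

/-- `d ∘ d = 0`. -/
theorem rowDiff_comp_rowDiff (n : ℕ) : (rowDiff n).comp (rowDiff n) = 0 := by
  apply Finsupp.lhom_ext'
  intro S
  apply LinearMap.ext_ring
  simp only [LinearMap.comp_apply, Finsupp.lsingle_apply, LinearMap.zero_apply]
  rw [rowDiff_single, map_sum]
  have hterm : ∀ e, rowDiff n
      (if h : e ∉ S.val ∧ IsRowMatching n (insert e S.val) then
          ((-1 : ℤ) ^ ((S.val.filter (fun g => e < g)).card)) •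
            Finsupp.single (RowMatching.mk' (insert e S.val) h.2) (1 : ℤ)
        else 0)
      = ∑ f ∈ Finset.range (n - 1),
        if h : (e ∉ S.val ∧ IsRowMatching n (insert e S.val)) ∧
            f ∉ insert e S.val ∧ IsRowMatching n (insert f (insert e S.val)) then
          (((-1 : ℤ) ^ ((S.val.filter (fun g => e < g)).card)) *
            ((-1 : ℤ) ^ (((insert e S.val).filter (fun g => f < g)).card))) •
            Finsupp.single (RowMatching.mk' (insert f (insert e S.val)) h.2.2) (1 : ℤ)
        else 0 := by
    intro e
    split
    · rename_i h1
      rw [map_smul, rowDiff_single, Finset.smul_sum]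
      refine Finset.sum_congr rfl fun f _ => ?_
      by_cases h2 : f ∉ insert e S.val ∧ IsRowMatching n (insert f (insert e S.val))
      · rw [dif_pos h2, dif_pos ⟨h1, h2⟩, smul_smul]
      · rw [dif_neg h2, dif_neg (fun hc => h2 hc.2), smul_zero]
    · rename_i h1
      rw [map_zero, eq_comm, Finset.sum_eq_zero]
      intro f _
      rw [dif_neg (fun hc => h1 hc.1)]
  rw [Finset.sum_congr rfl fun e _ => hterm e, ← Finset.sum_product']
  refine Finset.sum_involution (fun p _ => (p.2, p.1)) ?_ ?_ ?_ ?_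
  · rintro ⟨e, f⟩ hp
    dsimp only
    by_cases h : (e ∉ S.val ∧ IsRowMatching n (insert e S.val)) ∧
        f ∉ insert e S.val ∧ IsRowMatching n (insert f (insert e S.val))
    · obtain ⟨⟨he, hMe⟩, hf, hMef⟩ := h
      have hfS : f ∉ S.val := fun hc => hf (Finset.mem_insert_of_mem hc)
      have hef : e ≠ f := fun hc => hf (hc ▸ Finset.mem_insert_self e S.val)
      have hcomm : insert e (insert f S.val) = insert f (insert e S.val) :=
        Finset.insert_comm e f S.val
      have hMf : IsRowMatching n (insert f S.val) :=
        isRowMatching_subset hMef (by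
          intro x hx
          rcases Finset.mem_insert.1 hx with rfl | hx
          · exact Finset.mem_insert_self _ _
          · exact Finset.mem_insert_of_mem (Finset.mem_insert_of_mem hx))
      have heF : e ∉ insert f S.val := by
        simp only [Finset.mem_insert, not_or]
        exact ⟨hef, he⟩
      have hMfe : IsRowMatching n (insert e (insert f S.val)) := hcomm ▸ hMef
      rw [dif_pos ⟨⟨he, hMe⟩, hf, hMef⟩, dif_pos ⟨⟨hfS, hMf⟩, heF, hMfe⟩]
      have hsingle : (RowMatching.mk' (insert e (insert f S.val)) hMfe)
          = RowMatching.mk' (insert f (insert e S.val)) hMef := Subtype.ext hcomm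
      rw [hsingle, ← add_smul]
      convert zero_smul ℤ _
      rw [filter_insert_card he, filter_insert_card hfS]
      rcases lt_trichotomy e f with hlt | hlt | hlt
      · simp only [pow_add, if_pos hlt, if_neg (lt_asymm hlt), pow_one, pow_zero]; ring
      · exact absurd hlt hef
      · simp only [pow_add, if_neg (lt_asymm hlt), if_pos hlt, pow_one, pow_zero]; ring
    · rw [dif_neg h, dif_neg, add_zero]
      rintro ⟨⟨hfS, hMf⟩, heF, hMfe⟩
      have hfe : f ≠ e := fun hc => heF (hc ▸ Finset.mem_insert_self f S.val)
      have hcomm : insert f (insert e S.val) = insert e (insert f S.val) :=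
        Finset.insert_comm f e S.val
      exact h ⟨⟨fun hc => heF (Finset.mem_insert_of_mem hc),
          isRowMatching_subset hMfe (by
            intro x hx
            rcases Finset.mem_insert.1 hx with rfl | hx
            · exact Finset.mem_insert_self _ _
            · exact Finset.mem_insert_of_mem (Finset.mem_insert_of_mem hx))⟩,
        by simp only [Finset.mem_insert, not_or]; exact ⟨hfe, hfS⟩,
        hcomm ▸ hMfe⟩
  · rintro ⟨e, f⟩ hp hne hc
    have hfe : f = e := congrArg Prod.fst hc
    apply hne
    rw [dif_neg]
    rintro ⟨-, hf, -⟩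
    exact hf (hfe ▸ Finset.mem_insert_self e S.val)
  · rintro ⟨e, f⟩ hp
    simpa [Finset.mem_product] using (Finset.mem_product.1 hp).symm
  · rintro ⟨e, f⟩ hp
    rfl
end

section
/- Fix l and n : Fin l → ℕ, and let M denote the set of dot-row vectors for n, i.e., functions S assigning to each i : Fin l a partial matching S i of the row of n(i) dots. Order the positions (i, e) ∈ Fin l × ℕ lexicographically (first by the row index i, then by the position e within the row). Call a position (i, e) admissible for S ∈ M if e ∈ {0, …, n(i)−2}, e ∉ S i, and |e − g| ≥ 2 for every g ∈ S i. Define the ℤ-linear map d on the free ℤ-module with basis M (i.e., on M →₀ ℤ) by sending the basis element S to the sum, over all positions (i, e) admissible for S, of (−1)^{N(S, i, e)} times the basis element obtained from S by replacing S i with S i ∪ {e}, where N(S, i, e) is the number of positions (j, g) with g ∈ S j that are strictly greater than (i, e) in the lexicographic order. Then d ∘ d = 0. -/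
open scoped Classical

/-- The set `M` of dot-row vectors for `n : Fin l → ℕ`. -/
def DotRowVector (l : ℕ) (n : Fin l → ℕ) : Type :=
  {S : Fin l → Finset ℕ // ∀ i, IsRowMatching (n i) (S i)}

/-- `N(S, i, e)`: the number of positions `(j, g)` with `g ∈ S j` that are strictly
greater than `(i, e)` in the lexicographic order on `Fin l × ℕ`. -/
def lexCount {l : ℕ} (S : Fin l → Finset ℕ) (i : Fin l) (e : ℕ) : ℕ :=
  ∑ j : Fin l, ((S j).filter (fun g => i < j ∨ (i = j ∧ e < g))).card

/-- The combinatorial differential `d` on the free `ℤ`-module with basis `M`: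
the basis element `S` is sent to the sum, over all positions `(i, e)` admissible for `S`
(i.e. `e ∈ {0, …, n i - 2}`, `e ∉ S i`, and `S i ∪ {e}` is again a partial matching), of
`(-1) ^ N(S, i, e)` times the basis element obtained by replacing `S i` with `S i ∪ {e}`. -/
noncomputable def vecDiff (l : ℕ) (n : Fin l → ℕ) :
    (DotRowVector l n →₀ ℤ) →ₗ[ℤ] (DotRowVector l n →₀ ℤ) :=
  Finsupp.lift _ ℤ _ fun S =>
    ∑ i : Fin l, ∑ e ∈ Finset.range (n i - 1),
      if h : e ∉ S.val i ∧ IsRowMatching (n i) (insert e (S.val i)) then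
        ((-1 : ℤ) ^ lexCount S.val i e) •
          Finsupp.single
            (⟨Function.update S.val i (insert e (S.val i)), by
              intro j
              rcases eq_or_ne j i with hj | hj
              · subst hj; simpa using h.2
              · simpa [Function.update_of_ne hj] using S.prop j⟩ : DotRowVector l n)
            (1 : ℤ)
      else 0

/-! ### Auxiliary definitions and lemmas -/

section Aux

variable {l : ℕ} {n : Fin l → ℕ}

/-- Admissibility of adding position `e` in row `i`. -/
def Adm (n : Fin l → ℕ) (S : Fin l → Finset ℕ) (i : Fin l) (e : ℕ) : Prop :=
  e ∉ S i ∧ IsRowMatching (n i) (insert e (S i))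

/-- Add position `e` in row `i`. -/
def updFun (S : Fin l → Finset ℕ) (i : Fin l) (e : ℕ) : Fin l → Finset ℕ :=
  Function.update S i (insert e (S i))

lemma rowMatching_mono {m : ℕ} {T U : Finset ℕ} (h : IsRowMatching m T) (hUT : U ⊆ T) :
    IsRowMatching m U :=
  ⟨hUT.trans h.1, fun a ha b hb => h.2 a (hUT ha) b (hUT hb)⟩

lemma Adm.mem_range {S : Fin l → Finset ℕ} {i : Fin l} {e : ℕ} (h : Adm n S i e) :
    e ∈ Finset.range (n i - 1) :=
  h.2.1 (Finset.mem_insert_self _ _)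

lemma updFun_apply_self (S : Fin l → Finset ℕ) (i : Fin l) (e : ℕ) :
    updFun S i e i = insert e (S i) :=
  Function.update_self _ _ _

lemma updFun_apply_ne (S : Fin l → Finset ℕ) (i : Fin l) (e : ℕ) {k : Fin l} (hk : k ≠ i) :
    updFun S i e k = S k :=
  Function.update_of_ne hk _ _

lemma updFun_valid {S : Fin l → Finset ℕ} {i : Fin l} {e : ℕ}
    (hS : ∀ k, IsRowMatching (n k) (S k)) (h : Adm n S i e) :
    ∀ k, IsRowMatching (n k) (updFun S i e k) := by
  intro k
  rcases eq_or_ne k i with rfl | hk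
  · rw [updFun_apply_self]; exact h.2
  · rw [updFun_apply_ne _ _ _ hk]; exact hS k

lemma adm_swap {S : Fin l → Finset ℕ} {i j : Fin l} {e f : ℕ}
    (h1 : Adm n S i e) (h2 : Adm n (updFun S i e) j f) :
    Adm n S j f ∧ Adm n (updFun S j f) i e ∧ (i, e) ≠ (j, f) := by
  rcases eq_or_ne j i with rfl | hji
  · -- same row
    have hfe : f ∉ insert e (S j) := by
      have := h2.1; rwa [updFun_apply_self] at this
    have hm : IsRowMatching (n j) (insert f (insert e (S j))) := by
      have := h2.2; rwa [updFun_apply_self] at this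
    have hfne : f ≠ e := fun h => hfe (h ▸ Finset.mem_insert_self _ _)
    have hfS : f ∉ S j := fun h => hfe (Finset.mem_insert_of_mem h)
    refine ⟨⟨hfS, rowMatching_mono hm
        (Finset.insert_subset_insert f (Finset.subset_insert e (S j)))⟩, ⟨?_, ?_⟩, ?_⟩
    · rw [updFun_apply_self]
      intro he
      rcases Finset.mem_insert.1 he with h | h
      · exact hfne h.symm
      · exact h1.1 h
    · rw [updFun_apply_self, Finset.insert_comm]
      exact hm
    · intro hEq
      exact hfne ((Prod.mk.injEq _ _ _ _ ▸ hEq).2).symm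
  · -- different rows
    have hf : Adm n S j f := by
      refine ⟨?_, ?_⟩
      · have := h2.1; rwa [updFun_apply_ne _ _ _ hji] at this
      · have := h2.2; rwa [updFun_apply_ne _ _ _ hji] at this
    refine ⟨hf, ⟨?_, ?_⟩, ?_⟩
    · rw [updFun_apply_ne _ _ _ hji.symm]; exact h1.1
    · rw [updFun_apply_ne _ _ _ hji.symm]; exact h1.2
    · intro hEq
      exact hji (congrArg Prod.fst hEq).symm

lemma updFun_comm (S : Fin l → Finset ℕ) (i j : Fin l) (e f : ℕ) :
    updFun (updFun S i e) j f = updFun (updFun S j f) i e := by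
  rcases eq_or_ne j i with rfl | hji
  · unfold updFun
    rw [Function.update_self, Function.update_self, Function.update_idem,
      Function.update_idem, Finset.insert_comm]
  · unfold updFun
    rw [Function.update_of_ne hji, Function.update_of_ne hji.symm, Function.update_comm hji]

lemma lexCount_updFun {S : Fin l → Finset ℕ} {i : Fin l} {e : ℕ} (he : e ∉ S i)
    (j : Fin l) (f : ℕ) :
    lexCount (updFun S i e) j f
      = lexCount S j f + (if j < i ∨ (j = i ∧ f < e) then 1 else 0) := by
  have dec : ∀ T : Fin l → Finset ℕ,
      lexCount T j f = ((T i).filter (fun g => j < i ∨ (j = i ∧ f < g))).card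
        + ∑ k ∈ Finset.univ.erase i, ((T k).filter (fun g => j < k ∨ (j = k ∧ f < g))).card :=
    fun T => (Finset.add_sum_erase _ _ (Finset.mem_univ i)).symm
  rw [dec (updFun S i e), dec S]
  have h1 : ∑ k ∈ Finset.univ.erase i,
        ((updFun S i e k).filter (fun g => j < k ∨ (j = k ∧ f < g))).card
      = ∑ k ∈ Finset.univ.erase i, ((S k).filter (fun g => j < k ∨ (j = k ∧ f < g))).card := by
    refine Finset.sum_congr rfl fun k hk => ?_
    rw [updFun_apply_ne _ _ _ (Finset.mem_erase.1 hk).1]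
  rw [h1, updFun_apply_self]
  simp only [Finset.filter_insert]
  by_cases hP : j < i ∨ (j = i ∧ f < e)
  · rw [if_pos hP, if_pos hP,
      Finset.card_insert_of_notMem (fun hmem => he (Finset.mem_filter.1 hmem).1)]
    omega
  · rw [if_neg hP, if_neg hP]
    omega

lemma indicator_xor {i j : Fin l} {e f : ℕ} (hne : (i, e) ≠ (j, f)) :
    (j < i ∨ (j = i ∧ f < e)) ↔ ¬(i < j ∨ (i = j ∧ e < f)) := by
  rcases lt_trichotomy i j with h | rfl | h
  · constructor
    · rintro (hc | hc)
      · exact absurd h (asymm hc)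
      · exact absurd hc.1 h.ne'
    · intro hc; exact absurd (Or.inl h) hc
  · have hef : e ≠ f := fun hh => hne (by rw [hh])
    constructor
    · intro hLHS hRHS
      have hfe : f < e := by
        rcases hLHS with hc | hc
        · exact absurd hc (lt_irrefl i)
        · exact hc.2
      have hef' : e < f := by
        rcases hRHS with hc | hc
        · exact absurd hc (lt_irrefl i)
        · exact hc.2
      omega
    · intro hc
      right
      refine ⟨rfl, ?_⟩
      have h1 : ¬ e < f := fun hd => hc (Or.inr ⟨rfl, hd⟩)
      omega
  · constructor
    · rintro _ (hd | hd)
      · exact absurd hd (asymm h)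
      · exact absurd hd.1 h.ne'
    · intro _; exact Or.inl h

/-- The updated dot-row vector. -/
def updDRV (S : DotRowVector l n) (i : Fin l) (e : ℕ) (h : Adm n S.val i e) :
    DotRowVector l n :=
  ⟨updFun S.val i e, updFun_valid S.prop h⟩

@[simp] lemma updDRV_val (S : DotRowVector l n) (i : Fin l) (e : ℕ) (h : Adm n S.val i e) :
    (updDRV S i e h).val = updFun S.val i e := rfl

/-- The image of a basis vector under the differential. -/
noncomputable def FF (S : DotRowVector l n) : DotRowVector l n →₀ ℤ :=
  ∑ i : Fin l, ∑ e ∈ Finset.range (n i - 1),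
    if h : Adm n S.val i e then
      ((-1 : ℤ) ^ lexCount S.val i e) • Finsupp.single (updDRV S i e h) (1 : ℤ)
    else 0

lemma vecDiff_single (S : DotRowVector l n) :
    vecDiff l n (Finsupp.single S 1) = FF S := by
  rw [vecDiff, Finsupp.lift_apply, Finsupp.sum_single_index (by simp), one_smul, FF]
  simp only [Adm]
  refine Finset.sum_congr rfl fun i _ => Finset.sum_congr rfl fun e _ => ?_
  by_cases h : e ∉ S.val i ∧ IsRowMatching (n i) (insert e (S.val i))
  · congr 1
  · congr 1

/-- The "double insertion" term. -/
noncomputable def T2 (S : DotRowVector l n) (p q : Fin l × ℕ) : DotRowVector l n →₀ ℤ :=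
  if h : Adm n S.val p.1 p.2 ∧ Adm n (updFun S.val p.1 p.2) q.1 q.2 then
    ((-1 : ℤ) ^ (lexCount S.val p.1 p.2 + lexCount (updFun S.val p.1 p.2) q.1 q.2)) •
      Finsupp.single (updDRV (updDRV S p.1 p.2 h.1) q.1 q.2 h.2) (1 : ℤ)
  else 0

lemma T2_eq_zero_left {S : DotRowVector l n} {p q : Fin l × ℕ}
    (h : p.2 ∉ Finset.range (n p.1 - 1)) : T2 S p q = 0 := by
  rw [T2, dif_neg]
  exact fun hc => h hc.1.mem_range

lemma T2_eq_zero_right {S : DotRowVector l n} {p q : Fin l × ℕ}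
    (h : q.2 ∉ Finset.range (n q.1 - 1)) : T2 S p q = 0 := by
  rw [T2, dif_neg]
  exact fun hc => h hc.2.mem_range

lemma T2_neg (S : DotRowVector l n) (p q : Fin l × ℕ) : T2 S q p = - T2 S p q := by
  by_cases h : Adm n S.val p.1 p.2 ∧ Adm n (updFun S.val p.1 p.2) q.1 q.2
  · obtain ⟨hq1, hq2, hne⟩ := adm_swap h.1 h.2
    rw [T2, dif_pos ⟨hq1, hq2⟩, T2, dif_pos h]
    have hval : updDRV (updDRV S q.1 q.2 hq1) p.1 p.2 hq2
        = updDRV (updDRV S p.1 p.2 h.1) q.1 q.2 h.2 :=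
      Subtype.ext (updFun_comm S.val q.1 p.1 q.2 p.2)
    rw [hval, ← neg_smul]
    congr 1
    rw [lexCount_updFun h.1.1, lexCount_updFun hq1.1]
    have hxor := indicator_xor hne
    set a := lexCount S.val p.1 p.2
    set b := lexCount S.val q.1 q.2
    by_cases hc : p.1 < q.1 ∨ (p.1 = q.1 ∧ p.2 < q.2)
    · have hnc : ¬(q.1 < p.1 ∨ (q.1 = p.1 ∧ q.2 < p.2)) := fun hq => (hxor.mp hq) hc
      rw [if_pos hc, if_neg hnc]
      have hE : b + (a + 1) = (a + (b + 0)) + 1 := by ring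
      rw [hE, pow_succ]
      ring
    · have hnc : q.1 < p.1 ∨ (q.1 = p.1 ∧ q.2 < p.2) := hxor.mpr hc
      rw [if_neg hc, if_pos hnc]
      have hE : a + (b + 1) = (b + (a + 0)) + 1 := by ring
      rw [hE, pow_succ]
      ring
  · have h' : ¬(Adm n S.val q.1 q.2 ∧ Adm n (updFun S.val q.1 q.2) p.1 p.2) := by
      intro hc
      obtain ⟨hp1, hp2, _⟩ := adm_swap hc.1 hc.2
      exact h ⟨hp1, hp2⟩
    rw [T2, dif_neg h', T2, dif_neg h, neg_zero]

lemma vecDiff_FF (S : DotRowVector l n) :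
    vecDiff l n (FF S)
      = ∑ i : Fin l, ∑ e ∈ Finset.range (n i - 1),
          ∑ j : Fin l, ∑ f ∈ Finset.range (n j - 1), T2 S (i, e) (j, f) := by
  rw [FF, map_sum]
  refine Finset.sum_congr rfl fun i _ => ?_
  rw [map_sum]
  refine Finset.sum_congr rfl fun e _ => ?_
  by_cases h1 : Adm n S.val i e
  · rw [dif_pos h1, map_smul, vecDiff_single, FF, Finset.smul_sum]
    refine Finset.sum_congr rfl fun j _ => ?_
    rw [Finset.smul_sum]
    refine Finset.sum_congr rfl fun f _ => ?_
    by_cases h2 : Adm n (updFun S.val i e) j f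
    · have h2' : Adm n (updDRV S i e h1).val j f := h2
      rw [dif_pos h2', T2, dif_pos ⟨h1, h2⟩, smul_smul, ← pow_add]
      rfl
    · have h2' : ¬ Adm n (updDRV S i e h1).val j f := h2
      rw [dif_neg h2', T2, dif_neg (fun hc => h2 hc.2), smul_zero]
  · rw [dif_neg h1, map_zero]
    refine (Finset.sum_eq_zero fun j _ => Finset.sum_eq_zero fun f _ => ?_).symm
    rw [T2, dif_neg (fun hc => h1 hc.1)]

lemma quad_sum_zero (S : DotRowVector l n) :
    ∑ i : Fin l, ∑ e ∈ Finset.range (n i - 1),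
      ∑ j : Fin l, ∑ f ∈ Finset.range (n j - 1), T2 S (i, e) (j, f) = 0 := by
  set N := Finset.univ.sup n with hN
  have hsub : ∀ i : Fin l, Finset.range (n i - 1) ⊆ Finset.range N := fun i =>
    Finset.range_subset_range.mpr (le_trans (Nat.sub_le _ _) (Finset.le_sup (Finset.mem_univ i)))
  have step1 : ∑ i : Fin l, ∑ e ∈ Finset.range (n i - 1),
        ∑ j : Fin l, ∑ f ∈ Finset.range (n j - 1), T2 S (i, e) (j, f)
      = ∑ i : Fin l, ∑ e ∈ Finset.range N,
        ∑ j : Fin l, ∑ f ∈ Finset.range N, T2 S (i, e) (j, f) := by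
    refine Finset.sum_congr rfl fun i _ => ?_
    rw [Finset.sum_subset (hsub i) ?h]
    case h =>
      intro e _ he
      exact Finset.sum_eq_zero fun j _ => Finset.sum_eq_zero fun f _ =>
        T2_eq_zero_left he
    refine Finset.sum_congr rfl fun e _ => Finset.sum_congr rfl fun j _ => ?_
    exact Finset.sum_subset (hsub j) fun f _ hf => T2_eq_zero_right hf
  rw [step1]
  have key : ∑ p ∈ Finset.univ ×ˢ Finset.range N, ∑ q ∈ Finset.univ ×ˢ Finset.range N,
      T2 S p q = 0 := by
    have hswap : ∑ p ∈ Finset.univ ×ˢ Finset.range N, ∑ q ∈ Finset.univ ×ˢ Finset.range N,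
          T2 S p q
        = - ∑ p ∈ Finset.univ ×ˢ Finset.range N, ∑ q ∈ Finset.univ ×ˢ Finset.range N,
          T2 S p q := by
      conv_lhs => rw [Finset.sum_comm]
      rw [← Finset.sum_neg_distrib]
      refine Finset.sum_congr rfl fun q _ => ?_
      rw [← Finset.sum_neg_distrib]
      exact Finset.sum_congr rfl fun p _ => T2_neg S q p
    have h2 : (2 : ℤ) • (∑ p ∈ Finset.univ ×ˢ Finset.range N,
        ∑ q ∈ Finset.univ ×ˢ Finset.range N, T2 S p q) = 0 := by
      rw [two_smul]
      nth_rewrite 1 [hswap]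
      exact neg_add_cancel _
    have := smul_eq_zero.mp h2
    simpa using this
  calc ∑ i : Fin l, ∑ e ∈ Finset.range N, ∑ j : Fin l, ∑ f ∈ Finset.range N, T2 S (i, e) (j, f)
      = ∑ p ∈ Finset.univ ×ˢ Finset.range N, ∑ q ∈ Finset.univ ×ˢ Finset.range N, T2 S p q := by
        rw [Finset.sum_product]
        exact Finset.sum_congr rfl fun i _ => Finset.sum_congr rfl fun e _ => by
          rw [Finset.sum_product]
    _ = 0 := key

end Aux

/-- `d ∘ d = 0`. -/
theorem vecDiff_comp_vecDiff (l : ℕ) (n : Fin l → ℕ) :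
    (vecDiff l n).comp (vecDiff l n) = 0 := by
  apply Finsupp.lhom_ext
  intro S b
  have hb : Finsupp.single S b = b • Finsupp.single S (1 : ℤ) := by
    rw [Finsupp.smul_single, smul_eq_mul, mul_one]
  rw [LinearMap.comp_apply, LinearMap.zero_apply, hb, map_smul, map_smul, vecDiff_single,
    vecDiff_FF, quad_sum_zero, smul_zero]
end

section
/- Let R be a commutative ring, let n be a natural number, and let x : ℕ → R be any function. Then the sum, over all partial matchings S of the row of n dots, of (−1)^{|S|} · x(n − 2|S|), equals the sum over k from 0 to ⌊n/2⌋ of (−1)^k · C(n−k, k) · x(n − 2k), where C(n−k, k) = Nat.choose (n − k) k is interpreted in R via the natural map ℤ → R. -/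
open Finset

def Mrow (n : ℕ) : Finset (Finset ℕ) :=
  (Finset.range (n - 1)).powerset.filter
    (fun S => ∀ a ∈ S, ∀ b ∈ S, a ≠ b → 2 ≤ Nat.dist a b)

lemma mem_Mrow {n : ℕ} {S : Finset ℕ} :
    S ∈ Mrow n ↔ S ⊆ Finset.range (n - 1) ∧
      ∀ a ∈ S, ∀ b ∈ S, a ≠ b → 2 ≤ Nat.dist a b := by
  simp [Mrow]

lemma erase_mem_Mrow {n : ℕ} {S : Finset ℕ} (hS : S ∈ Mrow (n + 2)) (h : n ∈ S) :
    S.erase n ∈ Mrow n := by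
  rw [mem_Mrow] at hS ⊢
  obtain ⟨hsub, hsp⟩ := hS
  refine ⟨?_, ?_⟩
  · intro a ha
    have ha' : a ∈ S := mem_of_mem_erase ha
    have hane : a ≠ n := ne_of_mem_erase ha
    have h1 : a < n + 1 := by simpa using hsub ha'
    have h2 : 2 ≤ Nat.dist a n := hsp a ha' n h hane
    simp only [Nat.dist] at h2
    simp only [mem_range]
    omega
  · intro a ha b hb hab
    exact hsp a (mem_of_mem_erase ha) b (mem_of_mem_erase hb) hab

lemma insert_mem_Mrow {n : ℕ} {S : Finset ℕ} (hS : S ∈ Mrow n) :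
    insert n S ∈ Mrow (n + 2) := by
  rw [mem_Mrow] at hS ⊢
  obtain ⟨hsub, hsp⟩ := hS
  have hlt : ∀ a ∈ S, a < n - 1 := fun a ha => by simpa using hsub ha
  refine ⟨?_, ?_⟩
  · intro a ha
    rcases Finset.mem_insert.1 ha with rfl | ha
    · simp
    · have := hlt a ha; simp only [mem_range]; omega
  · intro a ha b hb hab
    rcases Finset.mem_insert.1 ha with ha | ha <;>
      rcases Finset.mem_insert.1 hb with hb | hb
    · omega
    · have := hlt b hb; simp only [Nat.dist]; omega
    · have := hlt a ha; simp only [Nat.dist]; omega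
    · exact hsp a ha b hb hab

lemma n_notMem_Mrow {n : ℕ} {S : Finset ℕ} (hS : S ∈ Mrow n) : n - 1 ∉ S := by
  intro h
  have := (mem_Mrow.1 hS).1 h
  simp at this

lemma Mrow_filter_not {n : ℕ} :
    (Mrow (n + 2)).filter (fun S => n ∉ S) = Mrow (n + 1) := by
  ext S
  simp only [mem_filter, mem_Mrow]
  constructor
  · rintro ⟨⟨hsub, hsp⟩, hn⟩
    refine ⟨?_, hsp⟩
    intro a ha
    have h1 : a < n + 1 := by simpa using hsub ha
    have h2 : a ≠ n := fun h => hn (h ▸ ha)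
    simp only [mem_range]; omega
  · rintro ⟨hsub, hsp⟩
    refine ⟨⟨?_, hsp⟩, ?_⟩
    · intro a ha
      have := hsub ha
      simp only [mem_range] at this ⊢
      omega
    · intro h
      have := hsub h
      simp at this

lemma two_mul_card_le : ∀ n : ℕ, ∀ S ∈ Mrow n, 2 * S.card ≤ n := by
  intro n
  induction n using Nat.strong_induction_on with
  | _ n ih =>
    match n with
    | 0 => intro S hS
           have h := (mem_Mrow.1 hS).1
           have h0 : (0:ℕ) - 1 = 0 := rfl
           rw [h0, Finset.range_zero, Finset.subset_empty] at h
           simp [h]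
    | 1 => intro S hS
           have h := (mem_Mrow.1 hS).1
           have h0 : (1:ℕ) - 1 = 0 := rfl
           rw [h0, Finset.range_zero, Finset.subset_empty] at h
           simp [h]
    | (n+2) =>
      intro S hS
      by_cases h : n ∈ S
      · have h1 := erase_mem_Mrow hS h
        have h2 := ih n (by omega) _ h1
        have h3 := Finset.card_erase_add_one h
        omega
      · have h1 : S ∈ Mrow (n + 1) := by
          rw [← Mrow_filter_not]; exact mem_filter.2 ⟨hS, h⟩
        have h2 := ih (n+1) (by omega) _ h1
        omega

noncomputable def Lrow (R : Type*) [CommRing R] (n : ℕ) (x : ℕ → R) : R :=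
  ∑ S ∈ Mrow n, (-1 : R) ^ S.card * x (n - 2 * S.card)

noncomputable def Grow (R : Type*) [CommRing R] (n : ℕ) (x : ℕ → R) : R :=
  ∑ k ∈ Finset.range (n + 1),
    (-1 : R) ^ k * ((Nat.choose (n - k) k : ℤ) : R) * x (n - 2 * k)

lemma Lrow_rec (R : Type*) [CommRing R] (n : ℕ) (x : ℕ → R) :
    Lrow R (n + 2) x = Lrow R (n + 1) (fun t => x (t + 1)) - Lrow R n x := by
  unfold Lrow
  rw [← Finset.sum_filter_add_sum_filter_not (Mrow (n+2)) (fun S => n ∈ S)]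
  have hA : ∑ S ∈ (Mrow (n+2)).filter (fun S => n ∉ S),
      (-1 : R) ^ S.card * x (n + 2 - 2 * S.card)
      = ∑ S ∈ Mrow (n+1), (-1 : R) ^ S.card * ((fun t => x (t+1)) (n + 1 - 2 * S.card)) := by
    rw [Mrow_filter_not]
    refine Finset.sum_congr rfl fun S hS => ?_
    have := two_mul_card_le (n+1) S hS
    congr 1
    simp only []
    congr 1
    omega
  have hB : ∑ S ∈ (Mrow (n+2)).filter (fun S => n ∈ S),
      (-1 : R) ^ S.card * x (n + 2 - 2 * S.card)
      = ∑ S ∈ Mrow n, -((-1 : R) ^ S.card * x (n - 2 * S.card)) := by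
    refine Finset.sum_nbij' (fun S => S.erase n) (fun S => insert n S) ?_ ?_ ?_ ?_ ?_
    · intro S hS
      obtain ⟨h1, h2⟩ := mem_filter.1 hS
      exact erase_mem_Mrow h1 h2
    · intro S hS
      refine mem_filter.2 ⟨insert_mem_Mrow hS, by simp⟩
    · intro S hS
      exact Finset.insert_erase (mem_filter.1 hS).2
    · intro S hS
      refine Finset.erase_insert ?_
      intro h
      have := (mem_Mrow.1 hS).1 h
      simp only [mem_range] at this
      omega
    · intro S hS
      obtain ⟨h1, h2⟩ := mem_filter.1 hS
      have hc : (S.erase n).card + 1 = S.card := Finset.card_erase_add_one h2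
      show (-1 : R) ^ S.card * x (n + 2 - 2 * S.card)
        = -((-1 : R) ^ (S.erase n).card * x (n - 2 * (S.erase n).card))
      have harg : n + 2 - 2 * S.card = n - 2 * (S.erase n).card := by omega
      rw [harg, ← hc, pow_succ]
      ring
  rw [hA, hB, Finset.sum_neg_distrib]
  ring

lemma Grow_rec (R : Type*) [CommRing R] (n : ℕ) (x : ℕ → R) :
    Grow R (n + 2) x = Grow R (n + 1) (fun t => x (t + 1)) - Grow R n x := by
  unfold Grow
  rw [Finset.sum_range_succ (n := n + 2)]
  have htop : (-1 : R) ^ (n+2) * ((Nat.choose (n + 2 - (n+2)) (n+2) : ℤ) : R) * x (n + 2 - 2 * (n+2)) = 0 := by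
    simp [Nat.choose_eq_zero_of_lt]
  rw [htop, add_zero]
  rw [Finset.sum_range_succ' _ (n+1)]
  rw [Finset.sum_range_succ' (n := n+1)
    (f := fun k => (-1 : R) ^ k * ((Nat.choose (n + 1 - k) k : ℤ) : R) * ((fun t => x (t+1)) (n + 1 - 2 * k)))]
  have h0 : (-1 : R) ^ 0 * ((Nat.choose (n + 2 - 0) 0 : ℤ) : R) * x (n + 2 - 2 * 0)
      = (-1 : R) ^ 0 * ((Nat.choose (n + 1 - 0) 0 : ℤ) : R) * ((fun t => x (t+1)) (n + 1 - 2 * 0)) := by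
    simp
  rw [h0]
  have key : ∀ i ∈ Finset.range (n + 1),
      (-1 : R) ^ (i+1) * ((Nat.choose (n + 2 - (i+1)) (i+1) : ℤ) : R) * x (n + 2 - 2 * (i+1))
      = (-1 : R) ^ (i+1) * ((Nat.choose (n + 1 - (i+1)) (i+1) : ℤ) : R)
          * ((fun t => x (t+1)) (n + 1 - 2 * (i+1)))
        - (-1 : R) ^ i * ((Nat.choose (n - i) i : ℤ) : R) * x (n - 2 * i) := by
    intro i hi
    simp only [Finset.mem_range] at hi
    rcases lt_trichotomy (2 * i) n with h | h | h
    · have e1 : n + 2 - (i + 1) = (n - i) + 1 := by omega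
      have e2 : n + 1 - (i + 1) = n - i := by omega
      have e3 : n + 2 - 2 * (i + 1) = n - 2 * i := by omega
      have e4 : n + 1 - 2 * (i + 1) + 1 = n - 2 * i := by omega
      rw [e1, e2, e3, Nat.choose_succ_succ]
      simp only []
      rw [e4, pow_succ]
      push_cast
      ring
    · -- n = 2 i
      have e1 : n + 2 - (i + 1) = i + 1 := by omega
      have e2 : n + 1 - (i + 1) = i := by omega
      have e3 : n - i = i := by omega
      have e4 : n + 2 - 2 * (i + 1) = 0 := by omega
      have e5 : n - 2 * i = 0 := by omega
      rw [e1, e2, e3, e4, e5]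
      simp only [Nat.choose_self, Nat.choose_succ_self, pow_succ]
      push_cast
      ring
    · have e1 : Nat.choose (n + 2 - (i+1)) (i+1) = 0 :=
        Nat.choose_eq_zero_of_lt (by omega)
      have e2 : Nat.choose (n + 1 - (i+1)) (i+1) = 0 :=
        Nat.choose_eq_zero_of_lt (by omega)
      have e3 : Nat.choose (n - i) i = 0 :=
        Nat.choose_eq_zero_of_lt (by omega)
      rw [e1, e2, e3]
      push_cast
      ring
  rw [Finset.sum_congr rfl key, Finset.sum_sub_distrib]
  ring

lemma Lrow_eq_Grow (R : Type*) [CommRing R] : ∀ n : ℕ, ∀ x : ℕ → R, Lrow R n x = Grow R n x := by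
  intro n
  induction n using Nat.strong_induction_on with
  | _ n ih =>
    match n, ih with
    | 0, _ =>
      intro x
      simp [Lrow, Grow, Mrow, Finset.filter_singleton]
    | 1, _ =>
      intro x
      simp [Lrow, Grow, Mrow, Finset.filter_singleton, Finset.sum_range_succ]
    | (n+2), ih =>
      intro x
      rw [Lrow_rec, Grow_rec, ih (n+1) (by omega), ih n (by omega)]

/-- the sum over all partial matchings `S` of the row of `n` dots of
`(-1)^|S| * x (n - 2|S|)` equals `∑_{k=0}^{⌊n/2⌋} (-1)^k * C(n-k, k) * x (n - 2k)`. -/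
theorem euler_char_row_sum (R : Type*) [CommRing R] (n : ℕ) (x : ℕ → R) :
    ∑ S ∈ (Finset.range (n - 1)).powerset.filter
        (fun S => ∀ a ∈ S, ∀ b ∈ S, a ≠ b → 2 ≤ Nat.dist a b),
      (-1 : R) ^ S.card * x (n - 2 * S.card)
    = ∑ k ∈ Finset.range (n / 2 + 1),
      (-1 : R) ^ k * ((Nat.choose (n - k) k : ℤ) : R) * x (n - 2 * k) := by
  have h1 : ∑ S ∈ (Finset.range (n - 1)).powerset.filter
        (fun S => ∀ a ∈ S, ∀ b ∈ S, a ≠ b → 2 ≤ Nat.dist a b),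
      (-1 : R) ^ S.card * x (n - 2 * S.card) = Lrow R n x := rfl
  rw [h1, Lrow_eq_Grow]
  unfold Grow
  symm
  refine Finset.sum_subset (Finset.range_subset_range.2 (by omega)) ?_
  intro k hk hk'
  simp only [Finset.mem_range] at hk hk'
  have : Nat.choose (n - k) k = 0 := Nat.choose_eq_zero_of_lt (by omega)
  rw [this]
  push_cast
  ring
end

section
/- Let R be a commutative ring, let l be a natural number, let n : Fin l → ℕ, and let x : (Fin l → ℕ) → R be any function. Then the sum, over all dot-row vectors S for n (i.e., over all functions S with S i a partial matching of the row of n(i) dots for each i), of (−1)^{Σ_i |S i|} · x(fun i => n i − 2·|S i|), equals the sum, over all k : Fin l → ℕ with k i ≤ ⌊n i / 2⌋ for every i, of (−1)^{Σ_i k i} · (∏_i C(n i − k i, k i)) · x(fun i => n i − 2·k i), where the binomial coefficients are interpreted in R via the natural map ℤ → R. -/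
open Finset

lemma dist_eq (a b : ℕ) : Nat.dist a b = a - b + (b - a) := rfl

lemma countA : ∀ n k : ℕ,
    (((Finset.range (n-1)).powerset.filter
      (fun S => ∀ a ∈ S, ∀ b ∈ S, a ≠ b → 2 ≤ Nat.dist a b)).filter
      (fun S => S.card = k)).card = (n - k).choose k := by
  intro n
  induction n using Nat.twoStepInduction with
  | zero =>
    intro k
    cases k with
    | zero => simp [Finset.filter_singleton]
    | succ k => simp [Finset.filter_eq_empty_iff, Finset.card_eq_zero]
  | one =>
    intro k
    cases k with
    | zero => simp [Finset.filter_singleton]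
    | succ k => simp [Finset.filter_eq_empty_iff, Finset.card_eq_zero]
  | more n ih ih' =>
    intro k
    rw [show n + 2 - 1 = n + 1 from rfl]
    cases k with
    | zero =>
      rw [Nat.choose_zero_right, Finset.card_eq_one]
      refine ⟨∅, ?_⟩
      ext S
      simp [Finset.card_eq_zero]
      rintro rfl
      simp
    | succ k =>
      set A := ((Finset.range (n+1)).powerset.filter
        (fun S => ∀ a ∈ S, ∀ b ∈ S, a ≠ b → 2 ≤ Nat.dist a b)).filter
        (fun S => S.card = k+1) with hA
      have hsplit := Finset.card_filter_add_card_filter_not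
        (s := A) (p := fun S => n ∈ S)
      have key : (Finset.filter (fun S => n ∈ S) A).card = (n - k).choose k := by
        rw [← ih k]
        apply Finset.card_nbij' (fun S => S.erase n) (fun T => insert n T)
        · intro S hS
          simp only [hA, Finset.mem_coe, Finset.mem_filter, Finset.mem_powerset] at hS ⊢
          obtain ⟨⟨⟨hsub, hsp⟩, hcard⟩, hn⟩ := hS
          refine ⟨⟨?_, ?_⟩, ?_⟩
          · intro a ha
            have h1 := Finset.mem_of_mem_erase ha
            have h2 : a ≠ n := Finset.ne_of_mem_erase ha
            have h3 := hsp a h1 n hn h2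
            have h4 := hsub h1
            rw [dist_eq] at h3
            simp only [Finset.mem_range] at *
            omega
          · intro a ha b hb hab
            exact hsp a (Finset.mem_of_mem_erase ha) b (Finset.mem_of_mem_erase hb) hab
          · rw [Finset.card_erase_of_mem hn, hcard]; omega
        · intro T hT
          simp only [hA, Finset.mem_coe, Finset.mem_filter, Finset.mem_powerset] at hT ⊢
          obtain ⟨⟨hsub, hsp⟩, hcard⟩ := hT
          have hnT : n ∉ T := by
            intro h; have := hsub h; simp only [Finset.mem_range] at this; omega
          refine ⟨⟨⟨?_, ?_⟩, ?_⟩, ?_⟩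
          · intro a ha
            rcases Finset.mem_insert.mp ha with rfl | ha
            · simp
            · have := hsub ha; simp only [Finset.mem_range] at *; omega
          · intro a ha b hb hab
            rw [Finset.mem_insert] at ha hb
            rcases ha with rfl | ha
            · rcases hb with rfl | hb
              · exact absurd rfl hab
              · have := hsub hb; simp only [Finset.mem_range] at this
                rw [dist_eq]; omega
            · rcases hb with rfl | hb
              · have := hsub ha; simp only [Finset.mem_range] at this
                rw [dist_eq]; omega
              · exact hsp a ha b hb hab
          · rw [Finset.card_insert_of_notMem hnT, hcard]
          · exact Finset.mem_insert_self n T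
        · intro S hS
          simp only [Finset.mem_coe, Finset.mem_filter] at hS
          exact Finset.insert_erase hS.2
        · intro T hT
          simp only [Finset.mem_coe, Finset.mem_filter, Finset.mem_powerset] at hT
          apply Finset.erase_insert
          intro h; have := hT.1.1 h; simp only [Finset.mem_range] at this; omega
      have key2 : (Finset.filter (fun S => ¬ n ∈ S) A).card
          = (n + 1 - (k+1)).choose (k+1) := by
        have := ih' (k+1)
        rw [show n + 1 - 1 = n from rfl] at this
        rw [← this]
        congr 1
        ext S
        simp only [hA, Finset.mem_filter, Finset.mem_powerset]
        constructor
        · rintro ⟨⟨⟨hsub, hsp⟩, hcard⟩, hn⟩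
          refine ⟨⟨?_, hsp⟩, hcard⟩
          intro a ha
          have h1 := hsub ha
          have hne : a ≠ n := fun h => hn (h ▸ ha)
          simp only [Finset.mem_range] at *
          omega
        · rintro ⟨⟨hsub, hsp⟩, hcard⟩
          have hn : n ∉ S := by
            intro h; have := hsub h; simp only [Finset.mem_range] at this; omega
          refine ⟨⟨⟨?_, hsp⟩, hcard⟩, hn⟩
          intro a ha
          have := hsub ha
          simp only [Finset.mem_range] at *
          omega
      rw [← hsplit, key, key2]
      rcases le_or_gt k n with h | h
      · obtain ⟨m, rfl⟩ : ∃ m, n = k + m := ⟨n - k, by omega⟩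
        have e1 : k + m + 2 - (k+1) = m + 1 := by omega
        have e2 : k + m + 1 - (k+1) = m := by omega
        have e3 : k + m - k = m := by omega
        rw [e1, e2, e3, Nat.choose_succ_succ, Nat.add_comm]
      · rw [Nat.choose_eq_zero_of_lt (by omega), Nat.choose_eq_zero_of_lt (by omega),
            Nat.choose_eq_zero_of_lt (by omega)]




/-- the sum over all dot-row vectors `S` for `n : Fin l → ℕ` of
`(-1)^{Σᵢ |S i|} * x (fun i => n i - 2|S i|)` equals the sum over all `k : Fin l → ℕ`
with `k i ≤ ⌊n i / 2⌋` of `(-1)^{Σᵢ k i} * (∏ᵢ C(n i - k i, k i)) * x (fun i => n i - 2 k i)`. -/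
theorem euler_char_vector_sum (R : Type*) [CommRing R] (l : ℕ) (n : Fin l → ℕ)
    (x : (Fin l → ℕ) → R) :
    ∑ S ∈ Fintype.piFinset (fun i => (Finset.range (n i - 1)).powerset.filter
        (fun S => ∀ a ∈ S, ∀ b ∈ S, a ≠ b → 2 ≤ Nat.dist a b)),
      (-1 : R) ^ (∑ i, (S i).card) * x (fun i => n i - 2 * (S i).card)
    = ∑ k ∈ Fintype.piFinset (fun i => Finset.range (n i / 2 + 1)),
      (-1 : R) ^ (∑ i, k i) * (∏ i, ((Nat.choose (n i - k i) (k i) : ℤ) : R))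
        * x (fun i => n i - 2 * k i) := by
  classical
  set M : (i : Fin l) → Finset (Finset ℕ) := fun i =>
    (Finset.range (n i - 1)).powerset.filter
      (fun S => ∀ a ∈ S, ∀ b ∈ S, a ≠ b → 2 ≤ Nat.dist a b) with hM
  -- enlarge RHS index set
  have hsub : Fintype.piFinset (fun i => Finset.range (n i / 2 + 1)) ⊆
      Fintype.piFinset (fun i => Finset.range (n i + 1)) :=
    Fintype.piFinset_subset _ _ (fun i => Finset.range_subset_range.mpr (by omega))
  rw [Finset.sum_subset hsub ?vanish]
  case vanish =>
    intro k hk hk'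
    simp only [Fintype.mem_piFinset, Finset.mem_range] at hk hk'
    push_neg at hk'
    obtain ⟨i, hi⟩ := hk'
    have : (n i - k i).choose (k i) = 0 := Nat.choose_eq_zero_of_lt (by omega)
    rw [Finset.prod_eq_zero (Finset.mem_univ i) (by rw [this]; norm_num)]
    ring
  -- group LHS by card vector
  have maps : ∀ S ∈ Fintype.piFinset M, (fun i => (S i).card) ∈
      Fintype.piFinset (fun i => Finset.range (n i + 1)) := by
    intro S hS
    simp only [Fintype.mem_piFinset, hM, Finset.mem_filter, Finset.mem_powerset] at hS
    simp only [Fintype.mem_piFinset, Finset.mem_range]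
    intro i
    have := Finset.card_le_card (hS i).1
    simp only [Finset.card_range] at this
    omega
  rw [← Finset.sum_fiberwise_of_maps_to maps]
  apply Finset.sum_congr rfl
  intro k hk
  have fib : (Fintype.piFinset M).filter (fun S => (fun i => (S i).card) = k)
      = Fintype.piFinset (fun i => (M i).filter (fun S => S.card = k i)) := by
    ext S
    simp only [Finset.mem_filter, Fintype.mem_piFinset, funext_iff]
    exact ⟨fun h i => ⟨h.1 i, h.2 i⟩, fun h => ⟨fun i => (h i).1, fun i => (h i).2⟩⟩
  rw [fib]
  have cconst : ∀ S ∈ Fintype.piFinset (fun i => (M i).filter (fun S => S.card = k i)),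
      (-1 : R) ^ (∑ i, (S i).card) * x (fun i => n i - 2 * (S i).card)
      = (-1 : R) ^ (∑ i, k i) * x (fun i => n i - 2 * k i) := by
    intro S hS
    simp only [Fintype.mem_piFinset, Finset.mem_filter] at hS
    have hc : ∀ i, (S i).card = k i := fun i => (hS i).2
    simp only [hc]
  rw [Finset.sum_congr rfl cconst, Finset.sum_const, Fintype.card_piFinset]
  have hcard : ∀ i, ((M i).filter (fun S => S.card = k i)).card
      = (n i - k i).choose (k i) := fun i => countA (n i) (k i)
  simp only [hcard]
  rw [nsmul_eq_mul, Nat.cast_prod]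
  push_cast
  ring
end
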